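/- Suppose κ : [a,b] → ℝ is C², a is a maximum point of κ², and the boundary relation ∂_s κ(a) = (κ(a) − κ̄)·k holds with k ≥ 0 and min κ ≤ κ̄ ≤ max κ. Then ∂_s(κ²)(a) = 0 and ∂_s²(κ²)(a) ≤ 0. -/

import Mathlib

open Set Filter Topology

theorem stmt_15 (a b : ℝ) (hab : a < b) (κ : ℝ → ℝ) (κbar k : ℝ)
    (hκ : ContDiff ℝ 2 κ)
    (hmax : ∀ x ∈ Icc a b, κ x ^ 2 ≤ κ a ^ 2)
    (hk : 0 ≤ k)
    (hbar_lo : sInf (κ '' Icc a b) ≤ κbar)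
    (hbar_hi : κbar ≤ sSup (κ '' Icc a b))
    (hbdry : deriv κ a = (κ a - κbar) * k) :
    deriv (fun t => κ t ^ 2) a = 0 ∧ deriv (deriv (fun t => κ t ^ 2)) a ≤ 0 := by
  set f : ℝ → ℝ := fun t => κ t ^ 2 with hfdef
  have hκd : Differentiable ℝ κ := hκ.differentiable (by norm_num)
  have hκ1 : ContDiff ℝ 1 (deriv κ) :=
    ((contDiff_succ_iff_deriv.mp (show ContDiff ℝ ((1:ℕ)+1) κ by exact_mod_cast hκ)).2.2)
  have hκ'd : Differentiable ℝ (deriv κ) := hκ1.differentiable (by norm_num)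
  -- formula for deriv f
  have hderiv : ∀ x, deriv f x = 2 * κ x ^ 1 * deriv κ x := by
    intro x
    exact (((hκd x).hasDerivAt).pow 2).deriv
  have hfd : Differentiable ℝ f := fun x => (((hκd x).hasDerivAt).pow 2).differentiableAt
  have hfd' : Differentiable ℝ (deriv f) := by
    have : (deriv f) = fun x => 2 * κ x ^ 1 * deriv κ x := funext hderiv
    rw [this]
    fun_prop
  -- κ a * (κ a - κbar) ≥ 0
  have habs : ∀ x ∈ Icc a b, |κ x| ≤ |κ a| := by
    intro x hx
    have := hmax x hx
    have h1 : |κ x| ^ 2 ≤ |κ a| ^ 2 := by simpa [sq_abs] using this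
    exact (pow_le_pow_iff_left₀ (abs_nonneg _) (abs_nonneg _) (by norm_num)).mp h1
  have hne : (κ '' Icc a b).Nonempty := ⟨κ a, a, ⟨le_refl a, hab.le⟩, rfl⟩
  have hkey : 0 ≤ κ a * (κ a - κbar) := by
    rcases le_or_gt 0 (κ a) with hpos | hneg
    · have hub : ∀ y ∈ κ '' Icc a b, y ≤ κ a := by
        rintro y ⟨x, hx, rfl⟩
        calc κ x ≤ |κ x| := le_abs_self _
        _ ≤ |κ a| := habs x hx
        _ = κ a := abs_of_nonneg hpos
      have : κbar ≤ κ a := hbar_hi.trans (csSup_le hne hub)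
      nlinarith
    · have hlb : ∀ y ∈ κ '' Icc a b, κ a ≤ y := by
        rintro y ⟨x, hx, rfl⟩
        have h1 : -|κ a| ≤ κ x := le_trans (neg_le_neg (habs x hx)) (neg_abs_le _)
        have h2 : κ a = -|κ a| := by rw [abs_of_neg hneg, neg_neg]
        linarith
      have : κ a ≤ κbar := (le_csInf hne hlb).trans hbar_lo
      nlinarith
  -- deriv f a ≥ 0
  have hge : 0 ≤ deriv f a := by
    rw [hderiv, hbdry]
    have : 2 * κ a ^ 1 * ((κ a - κbar) * k) = 2 * k * (κ a * (κ a - κbar)) := by ring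
    rw [this]
    positivity
  -- deriv f a ≤ 0 from max at left endpoint
  have hle : deriv f a ≤ 0 := by
    have htend : Tendsto (slope f a) (𝓝[≠] a) (𝓝 (deriv f a)) :=
      hasDerivAt_iff_tendsto_slope.mp (hfd a).hasDerivAt
    have htend' : Tendsto (slope f a) (𝓝[>] a) (𝓝 (deriv f a)) :=
      htend.mono_left (nhdsWithin_mono _ (fun x hx => ne_of_gt hx))
    refine le_of_tendsto htend' ?_
    filter_upwards [Ioc_mem_nhdsGT_of_mem ⟨le_refl a, hab⟩] with x hx
    have hfx : f x ≤ f a := hmax x ⟨hx.1.le, hx.2⟩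
    have hxa : 0 < x - a := sub_pos.mpr hx.1
    rw [slope_def_field]
    exact div_nonpos_of_nonpos_of_nonneg (by linarith) hxa.le
  have heq : deriv f a = 0 := le_antisymm hle hge
  refine ⟨heq, ?_⟩
  -- second derivative nonpositive
  by_contra hpos
  push_neg at hpos
  set L := deriv (deriv f) a with hL
  have htend : Tendsto (slope (deriv f) a) (𝓝[>] a) (𝓝 L) :=
    (hasDerivAt_iff_tendsto_slope.mp (hfd' a).hasDerivAt).mono_left
      (nhdsWithin_mono _ (fun x hx => ne_of_gt hx))
  have hev : ∀ᶠ x in 𝓝[>] a, 0 < deriv f x := by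
    filter_upwards [htend.eventually (eventually_gt_nhds hpos), self_mem_nhdsWithin]
      with x hx hxa
    rw [slope_def_field, heq, sub_zero] at hx
    have hxa' : 0 < x - a := sub_pos.mpr hxa
    have := mul_pos hx hxa'
    rwa [div_mul_cancel₀ _ (ne_of_gt hxa')] at this
  rcases mem_nhdsGT_iff_exists_Ioo_subset.mp hev with ⟨u, hu, hsub⟩
  set c := min u b with hc
  have hac : a < c := lt_min hu hab
  have hmono : StrictMonoOn f (Icc a c) := by
    apply strictMonoOn_of_deriv_pos (convex_Icc a c) (hfd.continuous.continuousOn)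
    intro x hx
    rw [interior_Icc] at hx
    exact hsub ⟨hx.1, hx.2.trans_le (min_le_left _ _)⟩
  have : f a < f c := hmono ⟨le_refl a, hac.le⟩ ⟨hac.le, le_refl c⟩ hac
  have : f c ≤ f a := hmax c ⟨hac.le, min_le_right _ _⟩
  linarith
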